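/- Let n ≥ 16 be an integer and let D be an S_{2,1}-free oriented graph on n vertices. Then the number of arcs of D satisfies a(D) ≤ ⌊(n+1)²/4⌋. -/

import Mathlib

/-- An oriented graph on `V`: an arc relation in which no two vertices are
joined by arcs in both directions (in particular it is irreflexive). -/
def IsOriented {V : Type*} (A : V → V → Prop) : Prop :=
  ∀ u v : V, A u v → ¬ A v u

/-- The in-degree of `v`: the number of in-neighbours of `v`. -/
noncomputable def inDeg {V : Type*} (A : V → V → Prop) (v : V) : ℕ :=
  {u : V | A u v}.ncard

/-- The number of arcs of the digraph. -/
noncomputable def arcCount {V : Type*} (A : V → V → Prop) : ℕ :=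
  {p : V × V | A p.1 p.2}.ncard

/-- A copy of `S_{k,1}` (the 1-subdivision of the in-star of order `k+1`)
centered at `v`: pairwise distinct vertices `v, u 0, …, u (k-1), w 0, …, w (k-1)`
with arcs `w i → u i` and `u i → v`. -/
def HasSCopyAt {V : Type*} (A : V → V → Prop) (k : ℕ) (v : V) : Prop :=
  ∃ u w : Fin k → V,
    Function.Injective u ∧ Function.Injective w ∧
    (∀ i j : Fin k, u i ≠ w j) ∧
    (∀ i : Fin k, u i ≠ v) ∧ (∀ i : Fin k, w i ≠ v) ∧
    (∀ i : Fin k, A (w i) (u i)) ∧ (∀ i : Fin k, A (u i) v)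

/-- `A` is `S_{k,1}`-free: no copy of `S_{k,1}` with any center. -/
def SFree {V : Type*} (A : V → V → Prop) (k : ℕ) : Prop :=
  ∀ v : V, ¬ HasSCopyAt A k v

/- ------------------------------------------------------------------ -/
/- Auxiliary machinery                                                 -/
/- ------------------------------------------------------------------ -/

open Finset
open scoped Classical

section Aux

variable {V : Type*} [Fintype V]

/-- finset of in-neighbours -/
noncomputable def NB (A : V → V → Prop) (v : V) : Finset V :=
  Finset.univ.filter (fun u => A u v)

noncomputable def dg (A : V → V → Prop) (v : V) : ℕ := (NB A v).card

lemma mem_NB {A : V → V → Prop} {u v : V} : u ∈ NB A v ↔ A u v := by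
  simp [NB]

lemma dg_def (A : V → V → Prop) (v : V) : dg A v = (NB A v).card := rfl

lemma inDeg_eq_dg (A : V → V → Prop) (v : V) : inDeg A v = dg A v := by
  have h : {u : V | A u v} = ↑(NB A v) := by
    ext u; simp [mem_NB]
  rw [inDeg, h, Set.ncard_coe_finset, dg_def]

lemma arcCount_eq_sum (A : V → V → Prop) : arcCount A = ∑ v, dg A v := by
  have h1 : {p : V × V | A p.1 p.2}
      = ↑(Finset.univ.filter (fun p : V × V => A p.1 p.2)) := by
    ext p; simp
  rw [arcCount, h1, Set.ncard_coe_finset]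
  rw [Finset.card_eq_sum_card_fiberwise
    (f := Prod.snd) (t := Finset.univ) (fun x _ => Finset.mem_univ _)]
  refine Finset.sum_congr rfl fun v _ => ?_
  rw [dg_def]
  apply Finset.card_bij (fun (p : V × V) _ => p.1)
  · intro p hp
    simp only [Finset.mem_filter, Finset.mem_univ, true_and] at hp
    apply mem_NB.mpr
    rw [← hp.2]
    exact hp.1
  · intro p hp q hq h
    simp only [Finset.mem_filter, Finset.mem_univ, true_and] at hp hq
    exact Prod.ext h (hp.2.trans hq.2.symm)
  · intro u hu
    exact ⟨(u, v), by simp [mem_NB.mp hu], rfl⟩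

lemma tri_card (A : V → V → Prop) (s : Finset V) :
    s.card = (s.filter fun u => dg A u = 0).card + (s.filter fun u => dg A u = 1).card
      + (s.filter fun u => 2 ≤ dg A u).card := by
  have h := Finset.card_filter_add_card_filter_not
    (s := s) (p := fun u => dg A u = 0)
  have h2 := Finset.card_filter_add_card_filter_not
    (s := s.filter fun u => ¬ dg A u = 0) (p := fun u => dg A u = 1)
  rw [Finset.filter_filter, Finset.filter_filter] at h2
  have e1 : s.filter (fun a => ¬ dg A a = 0 ∧ dg A a = 1) = s.filter (fun u => dg A u = 1) :=
    Finset.filter_congr (fun x _ => by omega)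
  have e2 : s.filter (fun a => ¬ dg A a = 0 ∧ ¬ dg A a = 1) = s.filter (fun u => 2 ≤ dg A u) :=
    Finset.filter_congr (fun x _ => by omega)
  rw [e1, e2] at h2
  omega

lemma two_card (A : V → V → Prop) (s : Finset V) :
    s.card = (s.filter fun u => dg A u = 0).card + (s.filter fun u => 1 ≤ dg A u).card := by
  have h := Finset.card_filter_add_card_filter_not
    (s := s) (p := fun u => dg A u = 0)
  have e1 : (s.filter fun u => ¬ dg A u = 0) = s.filter fun u => 1 ≤ dg A u :=
    Finset.filter_congr (fun x _ => by omega)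
  rw [e1] at h
  omega

lemma tri_sum (A : V → V → Prop) (f : V → ℕ) :
    ∑ v, f v = (∑ v ∈ Finset.univ.filter (fun u => dg A u = 0), f v)
      + (∑ v ∈ Finset.univ.filter (fun u => dg A u = 1), f v)
      + (∑ v ∈ Finset.univ.filter (fun u => 2 ≤ dg A u), f v) := by
  have h := Finset.sum_filter_add_sum_filter_not Finset.univ (fun u => dg A u = 0) f
  have h2 := Finset.sum_filter_add_sum_filter_not
    (Finset.univ.filter fun u => ¬ dg A u = 0) (fun u => dg A u = 1) f
  rw [Finset.filter_filter, Finset.filter_filter] at h2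
  have e1 : Finset.univ.filter (fun a => ¬ dg A a = 0 ∧ dg A a = 1)
      = Finset.univ.filter (fun u => dg A u = 1) :=
    Finset.filter_congr (fun x _ => by omega)
  have e2 : Finset.univ.filter (fun a => ¬ dg A a = 0 ∧ ¬ dg A a = 1)
      = Finset.univ.filter (fun u => 2 ≤ dg A u) :=
    Finset.filter_congr (fun x _ => by omega)
  rw [e1, e2] at h2
  omega

lemma ne_of_arc {A : V → V → Prop} (hori : IsOriented A) {x y : V} (h : A x y) : x ≠ y := by
  rintro rfl
  exact hori _ _ h h

/-- Core lemma: two "paths of length 2" into `v` with the required distinctness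
give a copy of `S₂,₁`, contradiction with freeness. -/
lemma no_path_pair {A : V → V → Prop} (hori : IsOriented A) (hfree : SFree A 2)
    {v u1 u2 w1 w2 : V} (h1 : A u1 v) (h2 : A u2 v) (h12 : u1 ≠ u2)
    (hw1 : A w1 u1) (hw2 : A w2 u2) (hw12 : w1 ≠ w2)
    (hw1u2 : w1 ≠ u2) (hw2u1 : w2 ≠ u1) : False := by
  apply hfree v
  refine ⟨![u1, u2], ![w1, w2], ?_, ?_, ?_, ?_, ?_, ?_, ?_⟩
  · intro i j hij
    fin_cases i <;> fin_cases j <;> simp_all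
  · intro i j hij
    fin_cases i <;> fin_cases j <;> simp_all
  · intro i j
    fin_cases i <;> fin_cases j <;> simp only [Matrix.cons_val_zero, Matrix.cons_val_one,
      Matrix.head_cons]
    · exact (ne_of_arc hori hw1).symm
    · exact hw2u1.symm
    · exact hw1u2.symm
    · exact (ne_of_arc hori hw2).symm
  · intro i
    fin_cases i <;> simp only [Matrix.cons_val_zero, Matrix.cons_val_one, Matrix.head_cons]
    · exact ne_of_arc hori h1
    · exact ne_of_arc hori h2
  · intro i
    fin_cases i <;> simp only [Matrix.cons_val_zero, Matrix.cons_val_one, Matrix.head_cons]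
    · rintro rfl; exact hori _ _ h1 hw1
    · rintro rfl; exact hori _ _ h2 hw2
  · intro i
    fin_cases i <;> simp only [Matrix.cons_val_zero, Matrix.cons_val_one, Matrix.head_cons]
    · exact hw1
    · exact hw2
  · intro i
    fin_cases i <;> simp only [Matrix.cons_val_zero, Matrix.cons_val_one, Matrix.head_cons]
    · exact h1
    · exact h2

/-- Every vertex has at most one in-neighbour of in-degree at least 2. -/
lemma c2_le_one (A : V → V → Prop) (hori : IsOriented A) (hfree : SFree A 2) (v : V) :
    ((NB A v).filter fun u => 2 ≤ dg A u).card ≤ 1 := by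
  by_contra hcon
  rw [not_le] at hcon
  rw [Finset.one_lt_card] at hcon
  obtain ⟨u1, hu1, u2, hu2, hne⟩ := hcon
  rw [Finset.mem_filter] at hu1 hu2
  obtain ⟨hu1N, hd1⟩ := hu1
  obtain ⟨hu2N, hd2⟩ := hu2
  have key : ∀ x y : V, A x v → A y v → x ≠ y → 2 ≤ dg A x → 2 ≤ dg A y → ¬ A x y → False := by
    intro x y hx hy hxy hdx hdy hnxy
    obtain ⟨w1, hw1m, hw1y⟩ := Finset.exists_mem_ne
      (s := NB A x) (by rw [← dg_def]; omega) y
    obtain ⟨w2, hw2m, hw2w1⟩ := Finset.exists_mem_ne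
      (s := NB A y) (by rw [← dg_def]; omega) w1
    exact no_path_pair hori hfree hx hy hxy (mem_NB.mp hw1m) (mem_NB.mp hw2m)
      (Ne.symm hw2w1) hw1y (fun heq => hnxy (heq ▸ mem_NB.mp hw2m))
  by_cases hA : A u1 u2
  · exact key u2 u1 (mem_NB.mp hu2N) (mem_NB.mp hu1N) hne.symm hd2 hd1 (hori _ _ hA)
  · exact key u1 u2 (mem_NB.mp hu1N) (mem_NB.mp hu2N) hne hd1 hd2 hA

/-- The pair fact: if `u` (with unique in-neighbour `pu ≠ u1`) and `u1`
(with `dg u1 ≥ 2`) both point to `v`, then `u, pu` are in-neighbours of `u1`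
and they are the only ones. -/
lemma pair_fact (A : V → V → Prop) (hori : IsOriented A) (hfree : SFree A 2)
    {v u u1 pu : V} (hu : A u v) (hu1 : A u1 v)
    (hNu : NB A u = {pu}) (hdu1 : 2 ≤ dg A u1) (hpu : pu ≠ u1) :
    A u u1 ∧ A pu u1 ∧ ∀ z, A z u1 → z = u ∨ z = pu := by
  have hdu : dg A u = 1 := by rw [dg_def, hNu, Finset.card_singleton]
  have hne : u1 ≠ u := by intro h; rw [← h] at hdu; omega
  have hpuu : A pu u := mem_NB.mp (by rw [hNu]; exact Finset.mem_singleton_self pu)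
  have hsub : ∀ z, A z u1 → z = u ∨ z = pu := by
    intro z hz
    by_contra hcon
    push_neg at hcon
    exact no_path_pair hori hfree hu1 hu hne hz hpuu hcon.2 hcon.1 hpu
  have hsub' : NB A u1 ⊆ ({u, pu} : Finset V) := by
    intro z hz
    rcases hsub z (mem_NB.mp hz) with h | h <;> simp [h]
  have hcard2 : ({u, pu} : Finset V).card ≤ 2 :=
    (Finset.card_insert_le u {pu}).trans (by simp)
  have heq : NB A u1 = ({u, pu} : Finset V) :=
    Finset.eq_of_subset_of_card_le hsub'
      (le_trans hcard2 (by rw [← dg_def]; exact hdu1))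
  refine ⟨?_, ?_, hsub⟩
  · exact mem_NB.mp (by rw [heq]; exact Finset.mem_insert_self u {pu})
  · exact mem_NB.mp (by rw [heq]; simp)

/-- The key structural lemma: if all in-degree-1 vertices point to a common
vertex `v₀` which also has an in-neighbour `u1` of in-degree ≥ 2, then some
vertex `y` of in-degree ≥ 2 has at most one non-source in-neighbour. -/
lemma exists_small_head (A : V → V → Prop) (hori : IsOriented A) (hfree : SFree A 2)
    {v₀ u1 : V} (hall : ∀ u, dg A u = 1 → A u v₀)
    (hu1v : A u1 v₀) (hdu1 : 2 ≤ dg A u1) :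
    ∃ y, 2 ≤ dg A y ∧ ((NB A y).filter fun z => 1 ≤ dg A z).card ≤ 1 := by
  by_cases hc : ∀ u, dg A u = 1 → ∀ w, A w u → w = u1
  · -- every in-degree-1 vertex has u1 as its unique in-neighbour
    refine ⟨u1, hdu1, ?_⟩
    have hsub : ((NB A u1).filter fun z => 1 ≤ dg A z)
        ⊆ ((NB A u1).filter fun z => 2 ≤ dg A z) := by
      intro z hz
      rcases Finset.mem_filter.mp hz with ⟨hzN, hz1⟩
      refine Finset.mem_filter.mpr ⟨hzN, ?_⟩
      rcases Nat.lt_or_ge (dg A z) 2 with h | h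
      · have hz1' : dg A z = 1 := by omega
        obtain ⟨pz, hNz⟩ := Finset.card_eq_one.mp
          (show (NB A z).card = 1 by rw [← dg_def]; exact hz1')
        have hpz : A pz z := mem_NB.mp (by rw [hNz]; exact Finset.mem_singleton_self pz)
        have hpzu1 : pz = u1 := hc z hz1' pz hpz
        exact absurd (mem_NB.mp hzN) (hori _ _ (hpzu1 ▸ hpz))
      · exact h
    exact le_trans (Finset.card_le_card hsub) (c2_le_one A hori hfree u1)
  · push_neg at hc
    obtain ⟨u, hdu, w, hwu, hwne⟩ := hc
    obtain ⟨pu, hNu⟩ := Finset.card_eq_one.mp (show (NB A u).card = 1 by rw [← dg_def]; exact hdu)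
    have hpuu : A pu u := mem_NB.mp (by rw [hNu]; exact Finset.mem_singleton_self pu)
    have hwpu : w = pu := by
      have hm : w ∈ NB A u := mem_NB.mpr hwu
      rw [hNu, Finset.mem_singleton] at hm
      exact hm
    have hpune : pu ≠ u1 := hwpu ▸ hwne
    obtain ⟨huu1, hpuu1, hsub⟩ :=
      pair_fact A hori hfree (hall u hdu) hu1v hNu hdu1 hpune
    have hupu : u ≠ pu := (ne_of_arc hori hpuu).symm
    rcases Nat.lt_or_ge (dg A pu) 1 with h0 | h1
    · -- dg pu = 0, take y := u1
      refine ⟨u1, hdu1, ?_⟩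
      have hsub1 : ((NB A u1).filter fun z => 1 ≤ dg A z) ⊆ {u} := by
        intro z hz
        rcases Finset.mem_filter.mp hz with ⟨hzN, hz1⟩
        rcases hsub z (mem_NB.mp hzN) with h | h
        · rw [h]; exact Finset.mem_singleton_self u
        · rw [h] at hz1; exact absurd hz1 (by omega)
      exact le_trans (Finset.card_le_card hsub1) (by simp)
    · rcases Nat.lt_or_ge (dg A pu) 2 with h1' | h2
      · -- dg pu = 1 : impossible
        exfalso
        have hdpu : dg A pu = 1 := by omega
        obtain ⟨pw, hNw⟩ := Finset.card_eq_one.mp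
          (show (NB A pu).card = 1 by rw [← dg_def]; exact hdpu)
        have hpww : A pw pu := mem_NB.mp (by rw [hNw]; exact Finset.mem_singleton_self pw)
        by_cases hpwu1 : pw = u1
        · exact hori _ _ hpuu1 (hpwu1 ▸ hpww)
        · obtain ⟨_, _, hsub2⟩ :=
            pair_fact A hori hfree (hall pu hdpu) hu1v hNw hdu1 hpwu1
          rcases hsub2 u huu1 with h | h
          · exact hupu h
          · exact hori _ _ hpuu (h ▸ hpww)
      · -- dg pu ≥ 2 : take y := pu
        refine ⟨pu, h2, ?_⟩
        have hsub1 : ((NB A pu).filter fun z => 1 ≤ dg A z)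
            ⊆ ((NB A pu).filter fun z => 2 ≤ dg A z) := by
          intro z hz
          rcases Finset.mem_filter.mp hz with ⟨hzN, hz1⟩
          refine Finset.mem_filter.mpr ⟨hzN, ?_⟩
          by_contra hzlt
          have hdz : dg A z = 1 := by omega
          have hzpu : A z pu := mem_NB.mp hzN
          have hzu : z ≠ u := by
            rintro rfl
            exact hori _ _ hzpu hpuu
          obtain ⟨pz, hNz⟩ := Finset.card_eq_one.mp
            (show (NB A z).card = 1 by rw [← dg_def]; exact hdz)
          have hpzz : A pz z := mem_NB.mp (by rw [hNz]; exact Finset.mem_singleton_self pz)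
          by_cases hpzu1 : pz = u1
          · exact no_path_pair hori hfree (hall u hdu) (hall z hdz) (Ne.symm hzu)
              hpuu (hpzu1 ▸ hpzz) hpune
              (by intro h; rw [h] at h2; omega)
              (by intro h; rw [h] at hdu1; omega)
          · obtain ⟨hzu1, _, hsub2⟩ :=
              pair_fact A hori hfree (hall z hdz) hu1v hNz hdu1 hpzu1
            rcases hsub2 u huu1 with h | h
            · exact hzu h.symm
            · rcases hsub2 pu hpuu1 with h' | h'
              · rw [h'] at h2; omega
              · exact hupu (h.trans h'.symm)
        exact le_trans (Finset.card_le_card hsub1) (c2_le_one A hori hfree pu)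

end Aux

/-- If `n ≥ 16` and `D` is an `S_{2,1}`-free oriented graph on `n`
vertices, then `a(D) ≤ ⌊(n+1)²/4⌋`. -/
theorem arc_bound_S21 {V : Type*} [Fintype V] (A : V → V → Prop)
    (n : ℕ) (hn : 16 ≤ n) (hcard : Fintype.card V = n)
    (hori : IsOriented A) (hfree : SFree A 2) :
    arcCount A ≤ (n + 1) ^ 2 / 4 := by
  subst hcard
  rw [arcCount_eq_sum A, Nat.le_div_iff_mul_le (by norm_num : (0:ℕ) < 4)]
  set s0 := (Finset.univ.filter fun u => dg A u = 0).card with hs0def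
  set s1 := (Finset.univ.filter fun u => dg A u = 1).card with hs1def
  set t := (Finset.univ.filter fun u => 2 ≤ dg A u).card with htdef
  have htri : Fintype.card V = s0 + s1 + t := by
    rw [hs0def, hs1def, htdef, ← Finset.card_univ]
    exact tri_card A Finset.univ
  have hsplit : ∑ v, dg A v
      = s1 + ∑ v ∈ Finset.univ.filter (fun u => 2 ≤ dg A u), dg A v := by
    have h := tri_sum A (dg A)
    have h0 : ∑ v ∈ Finset.univ.filter (fun u => dg A u = 0), dg A v = 0 :=
      Finset.sum_eq_zero fun v hv => (Finset.mem_filter.mp hv).2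
    have h1 : ∑ v ∈ Finset.univ.filter (fun u => dg A u = 1), dg A v = s1 := by
      rw [hs1def, Finset.sum_congr rfl fun v hv => (Finset.mem_filter.mp hv).2]
      simp
    omega
  have hc0 : ∀ v : V, ((NB A v).filter fun u => dg A u = 0).card ≤ s0 := by
    intro v
    rw [hs0def]
    refine Finset.card_le_card fun z hz => ?_
    exact Finset.mem_filter.mpr ⟨Finset.mem_univ z, (Finset.mem_filter.mp hz).2⟩
  have hc1 : ∀ v : V, ((NB A v).filter fun u => dg A u = 1).card ≤ s1 := by
    intro v
    rw [hs1def]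
    refine Finset.card_le_card fun z hz => ?_
    exact Finset.mem_filter.mpr ⟨Finset.mem_univ z, (Finset.mem_filter.mp hz).2⟩
  have hc2 := c2_le_one A hori hfree
  have hgen : ∀ v : V, dg A v ≤ s0 + s1 + 1 := by
    intro v
    have h := tri_card A (NB A v)
    rw [← dg_def] at h
    have g0 := hc0 v
    have g1 := hc1 v
    have g2 := hc2 v
    omega
  by_cases hP : ∃ v₀, (∀ u, dg A u = 1 → A u v₀) ∧ ∃ u1, A u1 v₀ ∧ 2 ≤ dg A u1
  · obtain ⟨v₀, hall, u1, hu1v, hdu1⟩ := hP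
    obtain ⟨y, hy2, hyφ⟩ := exists_small_head A hori hfree hall hu1v hdu1
    have hymem : y ∈ Finset.univ.filter (fun u => 2 ≤ dg A u) :=
      Finset.mem_filter.mpr ⟨Finset.mem_univ y, hy2⟩
    have ht1 : 1 ≤ t := by
      rw [htdef]
      exact Finset.card_pos.mpr ⟨y, hymem⟩
    have hdy : dg A y ≤ s0 + 1 := by
      have h := two_card A (NB A y)
      rw [← dg_def] at h
      have g0 := hc0 y
      omega
    have hrest : ∑ v ∈ (Finset.univ.filter fun u => 2 ≤ dg A u).erase y, dg A v
        ≤ (t - 1) * (s0 + s1 + 1) := by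
      have h := Finset.sum_le_card_nsmul ((Finset.univ.filter fun u => 2 ≤ dg A u).erase y)
        (dg A) (s0 + s1 + 1) (fun x _ => hgen x)
      rwa [Finset.card_erase_of_mem hymem, ← htdef, smul_eq_mul] at h
    have hSS : ∑ v ∈ Finset.univ.filter (fun u => 2 ≤ dg A u), dg A v
        ≤ (t - 1) * (s0 + s1 + 1) + (s0 + 1) := by
      rw [← Finset.sum_erase_add _ (dg A) hymem]
      exact Nat.add_le_add hrest hdy
    rw [hsplit, htri]
    refine le_trans (mul_le_mul_left (Nat.add_le_add_left hSS s1) 4) ?_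
    zify [ht1]
    nlinarith [sq_nonneg ((s0:ℤ) + s1 + 1 - t)]
  · have hv : ∀ v : V, dg A v ≤ s0 + s1 := by
      intro v
      by_cases hPv : ∀ u, dg A u = 1 → A u v
      · have hc2v : ((NB A v).filter fun u => 2 ≤ dg A u).card = 0 := by
          rw [Finset.card_eq_zero, Finset.filter_eq_empty_iff]
          intro u hu hu2
          exact hP ⟨v, hPv, u, mem_NB.mp hu, hu2⟩
        have h := tri_card A (NB A v)
        rw [← dg_def] at h
        have g0 := hc0 v
        have g1 := hc1 v
        omega
      · push_neg at hPv
        obtain ⟨u, hdu, hnA⟩ := hPv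
        have humem : u ∈ Finset.univ.filter (fun x => dg A x = 1) :=
          Finset.mem_filter.mpr ⟨Finset.mem_univ u, hdu⟩
        have hs11 : 1 ≤ s1 := by
          rw [hs1def]
          exact Finset.card_pos.mpr ⟨u, humem⟩
        have hc1v : ((NB A v).filter fun z => dg A z = 1).card ≤ s1 - 1 := by
          have hsub : ((NB A v).filter fun z => dg A z = 1)
              ⊆ (Finset.univ.filter fun x => dg A x = 1).erase u := by
            intro z hz
            rcases Finset.mem_filter.mp hz with ⟨hzN, hz1⟩
            refine Finset.mem_erase.mpr ⟨?_, Finset.mem_filter.mpr ⟨Finset.mem_univ z, hz1⟩⟩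
            rintro rfl
            exact hnA (mem_NB.mp hzN)
          have h := Finset.card_le_card hsub
          rwa [Finset.card_erase_of_mem humem, ← hs1def] at h
        have h := tri_card A (NB A v)
        rw [← dg_def] at h
        have g0 := hc0 v
        have g2 := hc2 v
        omega
    have hSS : ∑ v ∈ Finset.univ.filter (fun u => 2 ≤ dg A u), dg A v ≤ t * (s0 + s1) := by
      have h := Finset.sum_le_card_nsmul (Finset.univ.filter fun u => 2 ≤ dg A u)
        (dg A) (s0 + s1) (fun x _ => hv x)
      rwa [← htdef, smul_eq_mul] at h
    rw [hsplit, htri]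
    refine le_trans (mul_le_mul_left (Nat.add_le_add_left hSS s1) 4) ?_
    zify
    nlinarith [sq_nonneg ((s0:ℤ) + s1 - t - 1)]
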